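/- Let f : C → ℕ. An edge-colored graph (G, C, color) of order at least w has an f-chromatic spanning forest with exactly w components if and only if for every subset R of C, ω(G − E_R(G)) ≤ w + Σ_{c ∈ R} f(c). -/

import Mathlib

set_option linter.unusedSectionVars false
set_option linter.unusedVariables false
set_option maxHeartbeats 1000000

section Components
open SimpleGraph
variable {V : Type*}

open SimpleGraph

variable {V : Type*}

private lemma nc_le_of_le [Finite V] {H H' : SimpleGraph V} (h : H ≤ H') :
    Nat.card H'.ConnectedComponent ≤ Nat.card H.ConnectedComponent := by
  apply Nat.card_le_card_of_surjective (ConnectedComponent.map (Hom.ofLE h))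
  intro c'
  obtain ⟨v, rfl⟩ := c'.exists_rep
  exact ⟨H.connectedComponentMk v, ConnectedComponent.map_mk _ v⟩

private lemma nc_bot [Fintype V] :
    Nat.card (⊥ : SimpleGraph V).ConnectedComponent = Fintype.card V := by
  rw [← Nat.card_eq_fintype_card]
  refine (Nat.card_eq_of_bijective (SimpleGraph.connectedComponentMk ⊥) ⟨?_, ?_⟩).symm
  · intro a b hab
    exact (reachable_bot).mp (ConnectedComponent.eq.mp hab)
  · intro c; exact c.exists_rep

private lemma nc_le_card [Fintype V] (H : SimpleGraph V) :
    Nat.card H.ConnectedComponent ≤ Fintype.card V := by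
  rw [← Nat.card_eq_fintype_card]
  apply Nat.card_le_card_of_surjective (SimpleGraph.connectedComponentMk H)
  intro c; exact c.exists_rep

/-- Walk decomposition when one extra edge `s(u,v)` is present. -/
private lemma walk_decomp {A : Set (Sym2 V)} {u v a b : V}
    (p : (fromEdgeSet (insert s(u,v) A)).Walk a b) :
    (fromEdgeSet A).Reachable a b ∨
      ((fromEdgeSet A).Reachable a u ∧ (fromEdgeSet A).Reachable v b) ∨
      ((fromEdgeSet A).Reachable a v ∧ (fromEdgeSet A).Reachable u b) := by
  induction p with
  | nil => exact Or.inl (Reachable.refl _)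
  | @cons a c b h p ih =>
    rw [fromEdgeSet_adj] at h
    obtain ⟨hm, hne⟩ := h
    rcases Set.mem_insert_iff.mp hm with heq | hA
    · rw [Sym2.eq_iff] at heq
      rcases heq with ⟨rfl, rfl⟩ | ⟨rfl, rfl⟩
      · -- a = u, c = v
        rcases ih with h1 | ⟨h2, h3⟩ | ⟨h2, h3⟩
        · exact Or.inr (Or.inl ⟨Reachable.refl _, h1⟩)
        · exact Or.inr (Or.inl ⟨Reachable.refl _, h3⟩)
        · exact Or.inl h3
      · -- a = v, c = u
        rcases ih with h1 | ⟨h2, h3⟩ | ⟨h2, h3⟩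
        · exact Or.inr (Or.inr ⟨Reachable.refl _, h1⟩)
        · exact Or.inl h3
        · exact Or.inr (Or.inr ⟨Reachable.refl _, h3⟩)
    · have hac : (fromEdgeSet A).Reachable a c := Adj.reachable (fromEdgeSet_adj _ |>.mpr ⟨hA, hne⟩)
      rcases ih with h1 | ⟨h2, h3⟩ | ⟨h2, h3⟩
      · exact Or.inl (hac.trans h1)
      · exact Or.inr (Or.inl ⟨hac.trans h2, h3⟩)
      · exact Or.inr (Or.inr ⟨hac.trans h2, h3⟩)


private lemma exists_mk {G : SimpleGraph V} (c : G.ConnectedComponent) :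
    ∃ v, G.connectedComponentMk v = c := c.exists_rep

private lemma nc_insert_of_reachable [Finite V] {A : Set (Sym2 V)} {u v : V}
    (h : (fromEdgeSet A).Reachable u v) :
    Nat.card (fromEdgeSet (insert s(u,v) A)).ConnectedComponent =
      Nat.card (fromEdgeSet A).ConnectedComponent := by
  have hle : fromEdgeSet A ≤ fromEdgeSet (insert s(u,v) A) :=
    fromEdgeSet_mono (Set.subset_insert _ _)
  refine (Nat.card_eq_of_bijective (ConnectedComponent.map (Hom.ofLE hle))
    ⟨?_, ?_⟩).symm
  · intro x y hxy
    obtain ⟨a, rfl⟩ := exists_mk x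
    obtain ⟨b, rfl⟩ := exists_mk y
    rw [ConnectedComponent.map_mk, ConnectedComponent.map_mk] at hxy
    obtain ⟨p⟩ := ConnectedComponent.eq.mp hxy
    apply ConnectedComponent.eq.mpr
    rcases walk_decomp p with h1 | ⟨h2, h3⟩ | ⟨h2, h3⟩
    · exact h1
    · exact h2.trans (h.trans h3)
    · exact h2.trans (h.symm.trans h3)
  · intro c'
    obtain ⟨a, rfl⟩ := exists_mk c'
    exact ⟨(fromEdgeSet A).connectedComponentMk a, ConnectedComponent.map_mk _ a⟩

private lemma nc_insert_of_not_reachable [Finite V] {A : Set (Sym2 V)} {u v : V}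
    (hne : u ≠ v) (h : ¬ (fromEdgeSet A).Reachable u v) :
    Nat.card (fromEdgeSet (insert s(u,v) A)).ConnectedComponent + 1 =
      Nat.card (fromEdgeSet A).ConnectedComponent := by
  classical
  have hle : fromEdgeSet A ≤ fromEdgeSet (insert s(u,v) A) :=
    fromEdgeSet_mono (Set.subset_insert _ _)
  set cu := (fromEdgeSet A).connectedComponentMk u with hcu
  have hbij : Function.Bijective
      (fun y : {y : (fromEdgeSet A).ConnectedComponent // y ≠ cu} =>
        ConnectedComponent.map (Hom.ofLE hle) y.1) := by
    constructor
    · rintro ⟨x, hx⟩ ⟨y, hy⟩ hxy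
      obtain ⟨a, rfl⟩ := exists_mk x
      obtain ⟨b, rfl⟩ := exists_mk y
      simp only [ConnectedComponent.map_mk] at hxy
      obtain ⟨p⟩ := ConnectedComponent.eq.mp hxy
      apply Subtype.ext
      rcases walk_decomp p with h1 | ⟨h2, h3⟩ | ⟨h2, h3⟩
      · exact ConnectedComponent.eq.mpr h1
      · exact absurd (ConnectedComponent.eq.mpr h2) hx
      · exact absurd (ConnectedComponent.eq.mpr h3.symm) hy
    · intro c'
      obtain ⟨a, rfl⟩ := exists_mk c'
      by_cases ha : (fromEdgeSet A).connectedComponentMk a = cu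
      · refine ⟨⟨(fromEdgeSet A).connectedComponentMk v, ?_⟩, ?_⟩
        · intro hvc
          exact h (ConnectedComponent.eq.mp hvc).symm
        · simp only [ConnectedComponent.map_mk]
          apply ConnectedComponent.eq.mpr
          have hau : (fromEdgeSet A).Reachable a u := ConnectedComponent.eq.mp ha
          have huv : (fromEdgeSet (insert s(u,v) A)).Adj u v :=
            (fromEdgeSet_adj _).mpr ⟨Set.mem_insert _ _, hne⟩
          exact huv.reachable.symm.trans ((hau.mono hle).symm)
      · exact ⟨⟨_, ha⟩, rfl⟩
  have hcard := Nat.card_eq_of_bijective _ hbij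
  rw [← hcard, ← Finite.card_option]
  exact Nat.card_congr (Equiv.optionSubtypeNe cu)

end Components

section Omg
open SimpleGraph
variable {V : Type*}
set_option linter.unusedSectionVars false

variable [Fintype V] [DecidableEq (Sym2 V)]

set_option linter.unusedSectionVars false in
private noncomputable def omg (A : Finset (Sym2 V)) : ℕ :=
  Nat.card (fromEdgeSet (↑A : Set (Sym2 V))).ConnectedComponent

private lemma omg_empty : omg (∅ : Finset (Sym2 V)) = Fintype.card V := by
  unfold omg
  rw [Finset.coe_empty, fromEdgeSet_empty, nc_bot]

private lemma omg_anti {A B : Finset (Sym2 V)} (h : A ⊆ B) : omg B ≤ omg A :=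
  nc_le_of_le (fromEdgeSet_mono (by exact_mod_cast h))

private lemma omg_insert_reach {A : Finset (Sym2 V)} {u v : V}
    (h : (fromEdgeSet (↑A : Set (Sym2 V))).Reachable u v) :
    omg (insert s(u,v) A) = omg A := by
  unfold omg; rw [Finset.coe_insert]; exact nc_insert_of_reachable h

private lemma omg_insert_not_reach {A : Finset (Sym2 V)} {u v : V} (hne : u ≠ v)
    (h : ¬ (fromEdgeSet (↑A : Set (Sym2 V))).Reachable u v) :
    omg (insert s(u,v) A) + 1 = omg A := by
  unfold omg; rw [Finset.coe_insert]; exact nc_insert_of_not_reachable hne h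

private lemma omg_insert_ge (A : Finset (Sym2 V)) (x : Sym2 V) :
    omg A ≤ omg (insert x A) + 1 := by
  induction x using Sym2.ind with
  | _ u v =>
    by_cases hr : (fromEdgeSet (↑A : Set (Sym2 V))).Reachable u v
    · rw [omg_insert_reach hr]; omega
    · have hne : u ≠ v := fun h => hr (h ▸ Reachable.refl u)
      rw [← omg_insert_not_reach hne hr]

private lemma omg_union_le (A T : Finset (Sym2 V)) : omg A ≤ omg (A ∪ T) + T.card := by
  induction T using Finset.induction with
  | empty => simp
  | @insert x T hx ih =>
    have h1 : A ∪ insert x T = insert x (A ∪ T) := by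
      ext a; simp [Finset.mem_insert, Finset.mem_union]
    have h2 := omg_insert_ge (A ∪ T) x
    rw [h1, Finset.card_insert_of_notMem hx]
    omega

private lemma card_le_omg_add (A : Finset (Sym2 V)) :
    Fintype.card V ≤ omg A + A.card := by
  induction A using Finset.induction with
  | empty => simp [omg_empty]
  | @insert x A hx ih =>
    have h2 := omg_insert_ge A x
    rw [Finset.card_insert_of_notMem hx]
    omega

private lemma omg_diff_mono (D : Finset (Sym2 V)) {A B : Finset (Sym2 V)} (hAB : A ⊆ B) :
    omg (A ∪ D) + omg B ≤ omg (B ∪ D) + omg A := by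
  induction D using Finset.induction with
  | empty => simp; omega
  | @insert x D hx ih =>
    have e1 : A ∪ insert x D = insert x (A ∪ D) := by
      ext a; simp [Finset.mem_insert, Finset.mem_union]
    have e2 : B ∪ insert x D = insert x (B ∪ D) := by
      ext a; simp [Finset.mem_insert, Finset.mem_union]
    rw [e1, e2]
    induction x using Sym2.ind with
    | _ u v =>
      by_cases hr : (fromEdgeSet (↑(A ∪ D) : Set (Sym2 V))).Reachable u v
      · have hrB : (fromEdgeSet (↑(B ∪ D) : Set (Sym2 V))).Reachable u v := by
          apply hr.mono
          apply fromEdgeSet_mono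
          exact_mod_cast Finset.union_subset_union hAB (Finset.Subset.refl D)
        rw [omg_insert_reach hr, omg_insert_reach hrB]
        exact ih
      · have hne : u ≠ v := fun h => hr (h ▸ Reachable.refl u)
        have hA := omg_insert_not_reach hne hr
        have hB := omg_insert_ge (B ∪ D) s(u,v)
        omega

private lemma omg_supermod (A B : Finset (Sym2 V)) :
    omg A + omg B ≤ omg (A ∪ B) + omg (A ∩ B) := by
  have h := omg_diff_mono B (Finset.inter_subset_left (s₁ := A) (s₂ := B))
  have e1 : (A ∩ B) ∪ B = B := by
    ext a; simp
  rw [e1] at h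
  omega

private lemma isAcyclic_of_omg {A : Finset (Sym2 V)} (hnd : ∀ e ∈ A, ¬ e.IsDiag)
    (h : omg A + A.card ≤ Fintype.card V) :
    (fromEdgeSet (↑A : Set (Sym2 V))).IsAcyclic := by
  rw [isAcyclic_iff_forall_edge_isBridge]
  intro e he
  induction e using Sym2.ind with
  | _ u v =>
    rw [isBridge_iff]
    intro hreach
    have hmem : s(u,v) ∈ A := by
      rw [edgeSet_fromEdgeSet] at he
      exact he.1
    have hG : fromEdgeSet (↑A : Set (Sym2 V)) \ fromEdgeSet {s(u,v)} =
        fromEdgeSet (↑(A.erase s(u,v)) : Set (Sym2 V)) := by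
      ext a b
      simp only [sdiff_adj, fromEdgeSet_adj, Finset.coe_erase, Set.mem_diff,
        Set.mem_singleton_iff, Finset.mem_coe]
      tauto
    rw [deleteEdges, hG] at hreach
    have heq : omg A = omg (A.erase s(u,v)) := by
      conv_lhs => rw [← Finset.insert_erase hmem]
      exact omg_insert_reach hreach
    have hlow := card_le_omg_add (A.erase s(u,v))
    have hcard : (A.erase s(u,v)).card = A.card - 1 := Finset.card_erase_of_mem hmem
    have hpos : 1 ≤ A.card := Finset.card_pos.mpr ⟨_, hmem⟩
    omega

end Omg

section Abstract

private def Ax {α : Type*} [DecidableEq α] (E : Finset α) (r : Finset α → ℕ) : Prop :=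
  r ∅ = 0 ∧
  (∀ A B : Finset α, A ⊆ E → B ⊆ E → A ⊆ B → r A ≤ r B) ∧
  (∀ A : Finset α, A ⊆ E → ∀ x ∈ E, r (insert x A) ≤ r A + 1) ∧
  (∀ A B : Finset α, A ⊆ E → B ⊆ E → r (A ∪ B) + r (A ∩ B) ≤ r A + r B)

private lemma Ax.subset {α : Type*} [DecidableEq α] {E E' : Finset α} {r : Finset α → ℕ}
    (h : Ax E r) (hE : E' ⊆ E) : Ax E' r :=
  ⟨h.1, fun A B hA hB hAB => h.2.1 A B (hA.trans hE) (hB.trans hE) hAB,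
   fun A hA x hx => h.2.2.1 A (hA.trans hE) x (hE hx),
   fun A B hA hB => h.2.2.2 A B (hA.trans hE) (hB.trans hE)⟩

private lemma abstract_int {α : Type*} [DecidableEq α] (n : ℕ) :
    ∀ (E : Finset α), E.card ≤ n → ∀ (r1 r2 : Finset α → ℕ) (k : ℕ),
      Ax E r1 → Ax E r2 → (∀ A ⊆ E, k ≤ r1 A + r2 (E \ A)) →
      ∃ I, I ⊆ E ∧ r1 I = I.card ∧ r2 I = I.card ∧ k ≤ I.card := by
  induction n with
  | zero =>
    intro E hE r1 r2 k h1 h2 H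
    have hEe : E = ∅ := Finset.card_eq_zero.mp (Nat.le_zero.mp hE)
    subst hEe
    have := H ∅ (Finset.Subset.refl _)
    simp [h1.1, h2.1] at this
    exact ⟨∅, Finset.Subset.refl _, by simp [h1.1], by simp [h2.1], by simp [this]⟩
  | succ m ih =>
    intro E hE r1 r2 k h1 h2 H
    rcases Nat.eq_zero_or_pos k with rfl | hk
    · exact ⟨∅, Finset.empty_subset _, by simp [h1.1], by simp [h2.1], Nat.zero_le _⟩
    rcases Finset.eq_empty_or_nonempty E with rfl | ⟨x, hxE⟩
    · have := H ∅ (Finset.Subset.refl _)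
      simp [h1.1, h2.1] at this
      omega
    set E' := E.erase x with hE'def
    have hsub : E' ⊆ E := Finset.erase_subset _ _
    have hE' : E'.card ≤ m := by
      have hce : E'.card = E.card - 1 := by rw [hE'def]; exact Finset.card_erase_of_mem hxE
      have hcp := Finset.card_pos.mpr ⟨x, hxE⟩
      omega
    have hxE'not : x ∉ E' := Finset.notMem_erase _ _
    have hr1x_le : r1 {x} ≤ 1 := by
      have := h1.2.2.1 ∅ (Finset.empty_subset _) x hxE
      simpa [h1.1] using this
    have hr2x_le : r2 {x} ≤ 1 := by
      have := h2.2.2.1 ∅ (Finset.empty_subset _) x hxE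
      simpa [h2.1] using this
    by_cases hl1 : r1 {x} = 0
    · -- x is a loop of r1 : delete it
      have H' : ∀ A ⊆ E', k ≤ r1 A + r2 (E' \ A) := by
        intro A hA
        have hxA : x ∉ A := fun hx => hxE'not (hA hx)
        have hAE : A ⊆ E := hA.trans hsub
        have hiA : insert x A ⊆ E := Finset.insert_subset hxE hAE
        have hins : r1 (insert x A) ≤ r1 A := by
          have hsm := h1.2.2.2 A {x} hAE (Finset.singleton_subset_iff.mpr hxE)
          have e1 : A ∪ {x} = insert x A := by ext a; simp [or_comm]
          have e2 : A ∩ {x} = ∅ := by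
            ext a; simp only [Finset.mem_inter, Finset.mem_singleton, Finset.notMem_empty,
              iff_false, not_and]
            rintro ha rfl; exact hxA ha
          rw [e1, e2] at hsm
          omega
        have hEdiff : E \ insert x A = E' \ A := by
          ext a; simp only [Finset.mem_sdiff, Finset.mem_insert, Finset.mem_erase, hE'def]
          tauto
        have := H (insert x A) hiA
        rw [hEdiff] at this
        omega
      obtain ⟨I, hIs, hI1, hI2, hIk⟩ := ih E' hE' r1 r2 k (h1.subset hsub) (h2.subset hsub) H'
      exact ⟨I, hIs.trans hsub, hI1, hI2, hIk⟩
    by_cases hl2 : r2 {x} = 0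
    · -- x is a loop of r2 : delete it
      have H' : ∀ A ⊆ E', k ≤ r1 A + r2 (E' \ A) := by
        intro A hA
        have hAE : A ⊆ E := hA.trans hsub
        have hxB : x ∉ E' \ A := fun hx => hxE'not (Finset.mem_sdiff.mp hx).1
        have hBE : E' \ A ⊆ E := (Finset.sdiff_subset).trans hsub
        have hins : r2 (insert x (E' \ A)) ≤ r2 (E' \ A) := by
          have hsm := h2.2.2.2 (E' \ A) {x} hBE (Finset.singleton_subset_iff.mpr hxE)
          have e1 : E' \ A ∪ {x} = insert x (E' \ A) := by ext a; simp [or_comm]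
          have e2 : E' \ A ∩ {x} = ∅ := by
            ext a; simp only [Finset.mem_inter, Finset.mem_singleton, Finset.notMem_empty,
              iff_false, not_and]
            rintro ha rfl; exact hxB ha
          rw [e1, e2] at hsm
          omega
        have hEdiff : E \ A = insert x (E' \ A) := by
          ext a; simp only [Finset.mem_sdiff, Finset.mem_insert, Finset.mem_erase, hE'def]
          constructor
          · rintro ⟨haE, haA⟩
            by_cases hax : a = x
            · exact Or.inl hax
            · exact Or.inr ⟨⟨hax, haE⟩, haA⟩
          · rintro (rfl | ⟨⟨hax, haE⟩, haA⟩)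
            · exact ⟨hxE, fun hx => hxE'not (hA hx)⟩
            · exact ⟨haE, haA⟩
        have := H A hAE
        rw [hEdiff] at this
        omega
      obtain ⟨I, hIs, hI1, hI2, hIk⟩ := ih E' hE' r1 r2 k (h1.subset hsub) (h2.subset hsub) H'
      exact ⟨I, hIs.trans hsub, hI1, hI2, hIk⟩
    have hr1x : r1 {x} = 1 := by omega
    have hr2x : r2 {x} = 1 := by omega
    by_cases hdel : ∀ A ⊆ E', k ≤ r1 A + r2 (E' \ A)
    · obtain ⟨I, hIs, hI1, hI2, hIk⟩ :=
        ih E' hE' r1 r2 k (h1.subset hsub) (h2.subset hsub) hdel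
      exact ⟨I, hIs.trans hsub, hI1, hI2, hIk⟩
    have hins_ge : ∀ (r : Finset α → ℕ), Ax E r → r {x} = 1 → ∀ A ⊆ E', 1 ≤ r (insert x A) := by
      intro r hr hrx A hA
      have : r {x} ≤ r (insert x A) := by
        apply hr.2.1 _ _ (Finset.singleton_subset_iff.mpr hxE)
          (Finset.insert_subset hxE (hA.trans hsub))
        simp
      omega
    have hAxCon : ∀ (r : Finset α → ℕ), Ax E r → r {x} = 1 →
        Ax E' (fun A => r (insert x A) - 1) := by
      intro r hr hrx
      refine ⟨?_, ?_, ?_, ?_⟩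
      · show r (insert x ∅) - 1 = 0
        simp [hrx]
      · intro A B hA hB hAB
        show r (insert x A) - 1 ≤ r (insert x B) - 1
        have : r (insert x A) ≤ r (insert x B) := by
          apply hr.2.1 _ _ (Finset.insert_subset hxE (hA.trans hsub))
            (Finset.insert_subset hxE (hB.trans hsub))
          exact Finset.insert_subset_insert _ hAB
        omega
      · intro A hA y hy
        show r (insert x (insert y A)) - 1 ≤ (r (insert x A) - 1) + 1
        have hcomm : insert x (insert y A) = insert y (insert x A) := Finset.insert_comm _ _ _
        have hu : r (insert y (insert x A)) ≤ r (insert x A) + 1 :=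
          hr.2.2.1 (insert x A) (Finset.insert_subset hxE (hA.trans hsub)) y (hsub hy)
        have hge := hins_ge r hr hrx A hA
        rw [hcomm]
        omega
      · intro A B hA hB
        show r (insert x (A ∪ B)) - 1 + (r (insert x (A ∩ B)) - 1) ≤
          (r (insert x A) - 1) + (r (insert x B) - 1)
        have e1 : insert x A ∪ insert x B = insert x (A ∪ B) := by
          ext a; simp [Finset.mem_insert, Finset.mem_union]
        have e2 : insert x A ∩ insert x B = insert x (A ∩ B) := by
          ext a; simp [Finset.mem_insert, Finset.mem_inter]; tauto
        have hsm := hr.2.2.2 (insert x A) (insert x B)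
          (Finset.insert_subset hxE (hA.trans hsub)) (Finset.insert_subset hxE (hB.trans hsub))
        rw [e1, e2] at hsm
        have g1 := hins_ge r hr hrx A hA
        have g2 := hins_ge r hr hrx B hB
        have g3 := hins_ge r hr hrx (A ∪ B) (Finset.union_subset hA hB)
        have g4 := hins_ge r hr hrx (A ∩ B) ((Finset.inter_subset_left).trans hA)
        omega
    by_cases hcon : ∀ A ⊆ E', k - 1 ≤ (r1 (insert x A) - 1) + (r2 (insert x (E' \ A)) - 1)
    · obtain ⟨I, hIs, hI1, hI2, hIk⟩ := ih E' hE'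
        (fun A => r1 (insert x A) - 1) (fun A => r2 (insert x A) - 1) (k - 1)
        (hAxCon r1 h1 hr1x) (hAxCon r2 h2 hr2x) hcon
      have hxI : x ∉ I := fun hx => hxE'not (hIs hx)
      have hI1' : r1 (insert x I) - 1 = I.card := hI1
      have hI2' : r2 (insert x I) - 1 = I.card := hI2
      have g1 := hins_ge r1 h1 hr1x I hIs
      have g2 := hins_ge r2 h2 hr2x I hIs
      refine ⟨insert x I, Finset.insert_subset hxE (hIs.trans hsub), ?_, ?_, ?_⟩
      · rw [Finset.card_insert_of_notMem hxI]; omega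
      · rw [Finset.card_insert_of_notMem hxI]; omega
      · rw [Finset.card_insert_of_notMem hxI]; omega
    exfalso
    push_neg at hdel hcon
    obtain ⟨A1, hA1, hA1k⟩ := hdel
    obtain ⟨A2, hA2, hA2k⟩ := hcon
    have hxA1 : x ∉ A1 := fun hx => hxE'not (hA1 hx)
    have hxA2 : x ∉ A2 := fun hx => hxE'not (hA2 hx)
    have hA1E : A1 ⊆ E := hA1.trans hsub
    have hA2E : A2 ⊆ E := hA2.trans hsub
    have g1 := hins_ge r1 h1 hr1x A2 hA2
    have g2 := hins_ge r2 h2 hr2x (E' \ A2) (Finset.sdiff_subset)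
    have eB2 : insert x (E' \ A2) = E \ A2 := by
      ext a; simp only [Finset.mem_insert, Finset.mem_sdiff, Finset.mem_erase, hE'def]
      constructor
      · rintro (rfl | ⟨⟨hax, haE⟩, haA⟩)
        · exact ⟨hxE, hxA2⟩
        · exact ⟨haE, haA⟩
      · rintro ⟨haE, haA⟩
        by_cases hax : a = x
        · exact Or.inl hax
        · exact Or.inr ⟨⟨hax, haE⟩, haA⟩
    rw [eB2] at hA2k g2
    have key2 : r1 (insert x A2) + r2 (E \ A2) ≤ k := by omega
    have hB1E : E' \ A1 ⊆ E := (Finset.sdiff_subset).trans hsub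
    have hB2E : E \ A2 ⊆ E := Finset.sdiff_subset
    have i1 : (E' \ A1) ∪ (E \ A2) = E \ (A1 ∩ A2) := by
      ext a
      simp only [Finset.mem_union, Finset.mem_sdiff, Finset.mem_erase, Finset.mem_inter, hE'def]
      constructor
      · rintro (⟨⟨hax, haE⟩, haA⟩ | ⟨haE, haA⟩)
        · exact ⟨haE, fun h => haA h.1⟩
        · exact ⟨haE, fun h => haA h.2⟩
      · rintro ⟨haE, haA⟩
        by_cases hax : a = x
        · subst hax; exact Or.inr ⟨haE, hxA2⟩
        · by_cases h1m : a ∈ A1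
          · exact Or.inr ⟨haE, fun h2m => haA ⟨h1m, h2m⟩⟩
          · exact Or.inl ⟨⟨hax, haE⟩, h1m⟩
    have i2 : (E' \ A1) ∩ (E \ A2) = E \ insert x (A1 ∪ A2) := by
      ext a
      simp only [Finset.mem_inter, Finset.mem_sdiff, Finset.mem_erase, Finset.mem_insert,
        Finset.mem_union, hE'def]
      tauto
    have hsm2 := h2.2.2.2 (E' \ A1) (E \ A2) hB1E hB2E
    rw [i1, i2] at hsm2
    have i3 : A1 ∪ insert x A2 = insert x (A1 ∪ A2) := by
      ext a; simp [Finset.mem_insert, Finset.mem_union]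
    have i4 : A1 ∩ insert x A2 = A1 ∩ A2 := by
      ext a; simp only [Finset.mem_inter, Finset.mem_insert]
      constructor
      · rintro ⟨h1m, rfl | h2m⟩
        · exact absurd h1m hxA1
        · exact ⟨h1m, h2m⟩
      · rintro ⟨h1m, h2m⟩; exact ⟨h1m, Or.inr h2m⟩
    have hsm1 := h1.2.2.2 A1 (insert x A2) hA1E (Finset.insert_subset hxE hA2E)
    rw [i3, i4] at hsm1
    have hH1 := H (A1 ∩ A2) ((Finset.inter_subset_left).trans hA1E)
    have hH2 := H (insert x (A1 ∪ A2))
      (Finset.insert_subset hxE (Finset.union_subset hA1E hA2E))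
    omega

private lemma Ax_def {α : Type*} [DecidableEq α] (E : Finset α) (r : Finset α → ℕ) :
  Ax E r ↔ (r ∅ = 0 ∧
  (∀ A B : Finset α, A ⊆ E → B ⊆ E → A ⊆ B → r A ≤ r B) ∧
  (∀ A : Finset α, A ⊆ E → ∀ x ∈ E, r (insert x A) ≤ r A + 1) ∧
  (∀ A B : Finset α, A ⊆ E → B ⊆ E → r (A ∪ B) + r (A ∩ B) ≤ r A + r B)) := Iff.rfl

end Abstract

set_option linter.unusedSectionVars false
set_option maxHeartbeats 1000000
open SimpleGraph



theorem f_chromatic_spanning_forest_iff {V C : Type*} [Fintype V] [Fintype C]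
    (G : SimpleGraph V) (color : Sym2 V → C) (f : C → ℕ) (w : ℕ)
    (hw : w ≤ Fintype.card V) :
    (∃ F : SimpleGraph V, F ≤ G ∧ F.IsAcyclic ∧
        Nat.card F.ConnectedComponent = w ∧
        ∀ c : C, {e ∈ F.edgeSet | color e = c}.ncard ≤ f c) ↔
      ∀ R : Finset C,
        Nat.card (G.deleteEdges {e | color e ∈ R}).ConnectedComponent ≤
          w + ∑ c ∈ R, f c := by
  classical
  set n := Fintype.card V with hn
  constructor
  · -- easy direction
    rintro ⟨F, hFG, hFac, hFw, hFchrom⟩ R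
    set A := F.edgeFinset with hA
    have hFA : fromEdgeSet (↑A : Set (Sym2 V)) = F := by
      rw [hA, coe_edgeFinset, fromEdgeSet_edgeSet]
    set T := A.filter (fun e => color e ∈ R) with hT
    set A' := A.filter (fun e => ¬ color e ∈ R) with hA'
    have hunion : A' ∪ T = A := by
      rw [hA', hT, Finset.union_comm]
      exact Finset.filter_union_filter_not_eq _ _
    -- card of T is at most the sum of the f-values over R
    have hTcard : T.card ≤ ∑ c ∈ R, f c := by
      have hfib : T.card = ∑ c ∈ R, (T.filter (fun e => color e = c)).card :=
        Finset.card_eq_sum_card_fiberwise (fun e he => (Finset.mem_filter.mp he).2)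
      rw [hfib]
      apply Finset.sum_le_sum
      intro c _
      have hsub : T.filter (fun e => color e = c) ⊆ A.filter (fun e => color e = c) :=
        Finset.filter_subset_filter _ (Finset.filter_subset _ _)
      have hch := hFchrom c
      have hset : {e ∈ F.edgeSet | color e = c} = ↑(A.filter (fun e => color e = c)) := by
        rw [hA, Finset.coe_filter]
        simp [Set.ext_iff, mem_edgeFinset]
      rw [hset, Set.ncard_coe_finset] at hch
      exact le_trans (Finset.card_le_card hsub) hch
    have hDel : fromEdgeSet (↑A' : Set (Sym2 V)) ≤ G.deleteEdges {e | color e ∈ R} := by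
      intro a b hadj
      rw [fromEdgeSet_adj] at hadj
      obtain ⟨hm, hne⟩ := hadj
      rw [Finset.mem_coe, hA', Finset.mem_filter] at hm
      rw [deleteEdges_adj]
      refine ⟨hFG ?_, hm.2⟩
      have : s(a, b) ∈ F.edgeSet := by
        rw [← mem_edgeFinset]; exact hm.1
      exact (mem_edgeSet _).mp this
    calc Nat.card (G.deleteEdges {e | color e ∈ R}).ConnectedComponent
        ≤ omg A' := nc_le_of_le hDel
      _ ≤ omg (A' ∪ T) + T.card := omg_union_le _ _
      _ = omg A + T.card := by rw [hunion]
      _ = w + T.card := by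
          have : omg A = w := by
            show Nat.card (fromEdgeSet (↑A : Set (Sym2 V))).ConnectedComponent = w
            rw [hFA]; exact hFw
          rw [this]
      _ ≤ w + ∑ c ∈ R, f c := by omega
  · -- hard direction
    intro hyp
    set E := G.edgeFinset with hE
    set r1 : Finset (Sym2 V) → ℕ := fun A => n - omg A with hr1
    set r2 : Finset (Sym2 V) → ℕ := fun A =>
      ∑ c : C, min (f c) ((A.filter (fun e => color e = c)).card) with hr2
    have homg_le : ∀ A : Finset (Sym2 V), omg A ≤ n := by
      intro A
      have := omg_anti (Finset.empty_subset A)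
      rw [omg_empty] at this
      exact this
    have hax1 : Ax E r1 := by
      rw [Ax_def]
      refine ⟨?_, ?_, ?_, ?_⟩
      · show n - omg ∅ = 0
        rw [omg_empty]; omega
      · intro A B _ _ hAB
        have := omg_anti hAB
        show n - omg A ≤ n - omg B
        omega
      · intro A _ x _
        have := omg_insert_ge A x
        show n - omg (insert x A) ≤ (n - omg A) + 1
        have h2 := homg_le A
        omega
      · intro A B _ _
        have hs := omg_supermod A B
        have u1 := homg_le A; have u2 := homg_le B
        have u3 := homg_le (A ∪ B); have u4 := homg_le (A ∩ B)
        show (n - omg (A ∪ B)) + (n - omg (A ∩ B)) ≤ (n - omg A) + (n - omg B)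
        omega
    have hax2 : Ax E r2 := by
      rw [Ax_def]
      refine ⟨?_, ?_, ?_, ?_⟩
      · show (∑ c : C, min (f c) ((Finset.filter _ ∅).card)) = 0
        simp
      · intro A B _ _ hAB
        apply Finset.sum_le_sum
        intro c _
        exact min_le_min (le_refl _)
          (Finset.card_le_card (Finset.filter_subset_filter _ hAB))
      · intro A _ x _
        show (∑ c : C, min (f c) (((insert x A).filter (fun e => color e = c)).card)) ≤
          (∑ c : C, min (f c) ((A.filter (fun e => color e = c)).card)) + 1
        have hpt : ∀ c : C,
            min (f c) (((insert x A).filter (fun e => color e = c)).card) ≤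
              min (f c) ((A.filter (fun e => color e = c)).card) +
                (if color x = c then 1 else 0) := by
          intro c
          rw [Finset.filter_insert]
          by_cases hc : color x = c
          · rw [if_pos hc, if_pos hc]
            have := Finset.card_insert_le x (A.filter (fun e => color e = c))
            omega
          · rw [if_neg hc, if_neg hc]
            omega
        calc (∑ c : C, min (f c) (((insert x A).filter (fun e => color e = c)).card))
            ≤ ∑ c : C, (min (f c) ((A.filter (fun e => color e = c)).card) +
                (if color x = c then 1 else 0)) := Finset.sum_le_sum (fun c _ => hpt c)
          _ = (∑ c : C, min (f c) ((A.filter (fun e => color e = c)).card)) +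
                ∑ c : C, (if color x = c then 1 else 0) := Finset.sum_add_distrib
          _ = (∑ c : C, min (f c) ((A.filter (fun e => color e = c)).card)) + 1 := by
                rw [Finset.sum_ite_eq]
                simp
      · intro A B _ _
        show (∑ c : C, min (f c) (((A ∪ B).filter (fun e => color e = c)).card)) +
              (∑ c : C, min (f c) (((A ∩ B).filter (fun e => color e = c)).card)) ≤
            (∑ c : C, min (f c) ((A.filter (fun e => color e = c)).card)) +
              (∑ c : C, min (f c) ((B.filter (fun e => color e = c)).card))
        rw [← Finset.sum_add_distrib, ← Finset.sum_add_distrib]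
        apply Finset.sum_le_sum
        intro c _
        rw [Finset.filter_union, Finset.filter_inter_distrib]
        have hie := Finset.card_union_add_card_inter
          (A.filter (fun e => color e = c)) (B.filter (fun e => color e = c))
        have hm1 : (A.filter (fun e => color e = c)).card ≤
            ((A.filter (fun e => color e = c)) ∪ (B.filter (fun e => color e = c))).card :=
          Finset.card_le_card Finset.subset_union_left
        have hm2 : (B.filter (fun e => color e = c)).card ≤
            ((A.filter (fun e => color e = c)) ∪ (B.filter (fun e => color e = c))).card :=
          Finset.card_le_card Finset.subset_union_right
        omega
    have Hk : ∀ A ⊆ E, n - w ≤ r1 A + r2 (E \ A) := by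
      intro A hA
      set R : Finset C := Finset.univ.filter
        (fun c => f c ≤ (((E \ A).filter (fun e => color e = c)).card)) with hR
      have hcond := hyp R
      set B' := (E \ A).filter (fun e => ¬ color e ∈ R) with hB'
      -- r2 (E \ A) = ∑_{c ∈ R} f c + B'.card
      have hr2val : r2 (E \ A) = (∑ c ∈ R, f c) + B'.card := by
        show (∑ c : C, min (f c) (((E \ A).filter (fun e => color e = c)).card)) = _
        have hsplit := Finset.sum_filter_add_sum_filter_not Finset.univ (fun c => c ∈ R)
          (fun c => min (f c) (((E \ A).filter (fun e => color e = c)).card))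
        rw [Finset.filter_univ_mem] at hsplit
        rw [← hsplit]
        congr 1
        · apply Finset.sum_congr rfl
          intro c hc
          have hfc : f c ≤ ((E \ A).filter (fun e => color e = c)).card :=
            (Finset.mem_filter.mp hc).2
          omega
        · -- ∑ over colors not in R of the (small) fiber cards
          have hBcard : B'.card = ∑ c ∈ Finset.univ.filter (fun c => ¬ c ∈ R),
              (B'.filter (fun e => color e = c)).card := by
            apply Finset.card_eq_sum_card_fiberwise
            intro e he
            rw [hB', Finset.mem_coe, Finset.mem_filter] at he
            simp [he.2]
          have hfibeq : ∀ c ∈ Finset.univ.filter (fun c => ¬ c ∈ R),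
              B'.filter (fun e => color e = c) = (E \ A).filter (fun e => color e = c) := by
            intro c hc
            have hcR : ¬ c ∈ R := (Finset.mem_filter.mp hc).2
            rw [hB']
            ext e
            simp only [Finset.mem_filter]
            constructor
            · rintro ⟨⟨he, _⟩, hcc⟩; exact ⟨he, hcc⟩
            · rintro ⟨he, hcc⟩; exact ⟨⟨he, by rw [hcc]; exact hcR⟩, hcc⟩
          rw [hBcard]
          apply Finset.sum_congr rfl
          intro c hc
          have hcR : ¬ c ∈ R := (Finset.mem_filter.mp hc).2
          have hlt : ((E \ A).filter (fun e => color e = c)).card ≤ f c := by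
            by_contra hcon
            exact hcR (by rw [hR]; simp; omega)
          rw [hfibeq c hc]
          omega
      -- component bound
      have hDel : G.deleteEdges {e | color e ∈ R} ≤ fromEdgeSet (↑(A ∪ B') : Set (Sym2 V)) := by
        intro a b hadj
        rw [deleteEdges_adj] at hadj
        obtain ⟨hGadj, hcol⟩ := hadj
        rw [fromEdgeSet_adj]
        refine ⟨?_, hGadj.ne⟩
        rw [Finset.coe_union, Set.mem_union]
        have hEe : s(a, b) ∈ E := by
          rw [hE, mem_edgeFinset]; exact (mem_edgeSet _).mpr hGadj
        by_cases hAe : s(a, b) ∈ A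
        · exact Or.inl hAe
        · refine Or.inr ?_
          rw [Finset.mem_coe, hB', Finset.mem_filter]
          exact ⟨Finset.mem_sdiff.mpr ⟨hEe, hAe⟩, hcol⟩
      have h2 : omg (A ∪ B') ≤ w + ∑ c ∈ R, f c :=
        le_trans (nc_le_of_le hDel) hcond
      have h3 := omg_union_le A B'
      have h4 := homg_le A
      show n - w ≤ (n - omg A) + r2 (E \ A)
      rw [hr2val]
      omega
    obtain ⟨I, hIE, hI1, hI2, hIk⟩ :=
      abstract_int E.card E le_rfl r1 r2 (n - w) hax1 hax2 Hk
    have hI1' : n - omg I = I.card := hI1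
    have homgIle := homg_le I
    have hlowI := card_le_omg_add I
    have homgI : omg I + I.card = n := by omega
    obtain ⟨J, hJI, hJcard⟩ := Finset.exists_subset_card_eq hIk
    have hJE : J ⊆ E := hJI.trans hIE
    have homgJ : omg J = w := by
      have hJ1 := card_le_omg_add J
      have hJ2 : omg J ≤ omg I + (I \ J).card := by
        have := omg_union_le J (I \ J)
        rw [Finset.union_sdiff_of_subset hJI] at this
        exact this
      have hsd : (I \ J).card = I.card - J.card := Finset.card_sdiff_of_subset hJI
      omega
    -- per-color counts of I
    have hIchrom : ∀ c : C, (I.filter (fun e => color e = c)).card ≤ f c := by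
      have hfib : I.card = ∑ c : C, (I.filter (fun e => color e = c)).card :=
        Finset.card_eq_sum_card_fiberwise (fun e _ => Finset.mem_univ _)
      have hI2' : (∑ c : C, min (f c) ((I.filter (fun e => color e = c)).card)) = I.card := hI2
      rw [hfib] at hI2'
      have := (Finset.sum_eq_sum_iff_of_le
        (fun c _ => min_le_right (f c) ((I.filter (fun e => color e = c)).card))).mp hI2'
      intro c
      have hc := this c (Finset.mem_univ c)
      omega
    have hndJ : ∀ e ∈ J, ¬ e.IsDiag := by
      intro e he
      apply G.not_isDiag_of_mem_edgeSet
      rw [← mem_edgeFinset]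
      exact hJE he
    have hJsubE : (↑J : Set (Sym2 V)) ⊆ G.edgeSet := by
      intro e he
      rw [← coe_edgeFinset]
      exact hJE he
    have hedgeJ : (fromEdgeSet (↑J : Set (Sym2 V))).edgeSet = ↑J := by
      rw [edgeSet_fromEdgeSet]
      ext e
      simp only [Set.mem_diff, Set.mem_setOf_eq, Finset.mem_coe, and_iff_left_iff_imp]
      exact fun he => hndJ e he
    refine ⟨fromEdgeSet (↑J : Set (Sym2 V)), ?_, ?_, ?_, ?_⟩
    · exact le_of_le_of_eq (fromEdgeSet_mono hJsubE) (fromEdgeSet_edgeSet G)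
    · apply isAcyclic_of_omg hndJ
      rw [homgJ, hJcard]
      omega
    · show omg J = w
      exact homgJ
    · intro c
      have hset : {e ∈ (fromEdgeSet (↑J : Set (Sym2 V))).edgeSet | color e = c} =
          ↑(J.filter (fun e => color e = c)) := by
        rw [hedgeJ, Finset.coe_filter]
        ext e; simp
      rw [hset, Set.ncard_coe_finset]
      exact le_trans (Finset.card_le_card
        (Finset.filter_subset_filter _ hJI)) (hIchrom c)
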